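/- Let G be a finite abelian group and H a proper subgroup of G. Then H is a perfect code of G if and only if H₂ is a perfect code of the group G₂. -/

import Mathlib

/-- The Cayley graph of a group `G` with connection set `S`: distinct vertices `x`, `y`
are adjacent iff `y * x⁻¹ ∈ S` (for inverse-closed `S` this relation is symmetric). -/
def cayley (G : Type*) [Group G] (S : Set G) : SimpleGraph G :=
  SimpleGraph.fromRel (fun x y => y * x⁻¹ ∈ S)

/-- `C` is a perfect code in the graph `Γ`: `C` is an independent set and every vertex
outside `C` is adjacent to exactly one vertex of `C`. -/
def IsPerfectCode {V : Type*} (Γ : SimpleGraph V) (C : Set V) : Prop :=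
  (∀ u ∈ C, ∀ v ∈ C, ¬ Γ.Adj u v) ∧ ∀ v ∉ C, ∃! u, u ∈ C ∧ Γ.Adj v u

/-- `C` is a perfect code of the group `G`: there is an inverse-closed `S ⊆ G` with
`1 ∉ S` such that `C` is a perfect code in `Cay(G, S)`. -/
def IsPerfectCodeOfGroup (G : Type*) [Group G] (C : Set G) : Prop :=
  ∃ S : Set G, S⁻¹ = S ∧ (1 : G) ∉ S ∧ IsPerfectCode (cayley G S) C

/-- The Sylow `2`-subgroup of a finite abelian group: the subgroup of all elements
whose order is a power of `2`. -/
def sylowTwo (G : Type*) [CommGroup G] : Subgroup G :=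
  haveI : Fact (Nat.Prime 2) := ⟨Nat.prime_two⟩
  CommGroup.primaryComponent G 2

theorem code_iff_crit {G : Type*} [CommGroup G] (H : Subgroup G) :
    IsPerfectCodeOfGroup G (H : Set G) ↔ ∀ g : G, g ^ 2 ∈ H → ∃ h ∈ H, (g * h) ^ 2 = 1 := by
  classical
  constructor
  · rintro ⟨S, hSinv, hS1, hind, huniq⟩
    have hSH : ∀ x ∈ S, x ∉ (H : Set G) := by
      intro x hxS hxH
      have hx1 : (1 : G) ≠ x := fun h => hS1 (h ▸ hxS)
      exact hind 1 H.one_mem x hxH ((SimpleGraph.fromRel_adj _ 1 x).2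
        ⟨hx1, Or.inl (by simpa using hxS)⟩)
    intro g hg2
    by_cases hg : g ∈ H
    · exact ⟨g⁻¹, H.inv_mem hg, by simp⟩
    · obtain ⟨u, ⟨huH, hadj⟩, hun⟩ := huniq g hg
      rw [cayley, SimpleGraph.fromRel_adj] at hadj
      have hs : g * u⁻¹ ∈ S := by
        rcases hadj.2 with h | h
        · have : (u * g⁻¹)⁻¹ ∈ S⁻¹ := by simpa [Set.mem_inv] using h
          simpa [mul_inv_rev, hSinv] using this
        · exact h
      set s := g * u⁻¹ with hsdef
      have hvH : s⁻¹ ∉ (H : Set G) := fun h => hSH s hs (by simpa using H.inv_mem h)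
      obtain ⟨u₀, _, hun₀⟩ := huniq s⁻¹ hvH
      have h1 : u₀ = 1 := by
        refine (hun₀ 1 ⟨H.one_mem, ?_⟩).symm
        rw [cayley, SimpleGraph.fromRel_adj]
        refine ⟨fun h => hvH (h ▸ H.one_mem), Or.inl ?_⟩
        simpa using hs
      have hh0mem : u ^ 2 * (g ^ 2)⁻¹ ∈ H := H.mul_mem (H.pow_mem huH 2) (H.inv_mem hg2)
      have key : u ^ 2 * (g ^ 2)⁻¹ * (g * u⁻¹) = u * g⁻¹ := by
        have e1 : (g ^ 2)⁻¹ * g = g⁻¹ := by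
          rw [pow_two, mul_inv_rev, mul_assoc, inv_mul_cancel, mul_one]
        calc u ^ 2 * (g ^ 2)⁻¹ * (g * u⁻¹) = u ^ 2 * ((g ^ 2)⁻¹ * g) * u⁻¹ := by
              rw [mul_assoc, mul_assoc, mul_assoc]
          _ = u ^ 2 * u⁻¹ * g⁻¹ := by rw [e1, mul_right_comm]
          _ = u * g⁻¹ := by group
      have h2 : u₀ = u ^ 2 * (g ^ 2)⁻¹ := by
        refine (hun₀ _ ⟨hh0mem, ?_⟩).symm
        rw [cayley, SimpleGraph.fromRel_adj]
        constructor
        · intro h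
          exact hvH (h ▸ hh0mem)
        · left
          have : u ^ 2 * (g ^ 2)⁻¹ * (s⁻¹)⁻¹ = s⁻¹ := by
            rw [inv_inv, hsdef, key]; group
          rw [this]
          rw [← hSinv]
          simpa [Set.mem_inv] using hs
      have hu2 : u ^ 2 = g ^ 2 := by
        have h3 : u ^ 2 * (g ^ 2)⁻¹ = 1 := by rw [← h2, h1]
        exact mul_inv_eq_one.1 h3
      refine ⟨u⁻¹, H.inv_mem huH, ?_⟩
      rw [mul_pow, inv_pow, hu2, mul_inv_cancel]
  · intro hcrit
    letI : LinearOrder (G ⧸ H) := IsWellOrder.linearOrder WellOrderingRel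
    have hself : ∀ q : G ⧸ H, q⁻¹ = q → ∃ x : G, (x : G ⧸ H) = q ∧ x ^ 2 = 1 := by
      intro q hq
      obtain ⟨v, rfl⟩ := QuotientGroup.mk_surjective q
      have hv2 : v ^ 2 ∈ H := by
        have : ((v⁻¹ : G) : G ⧸ H) = (v : G ⧸ H) := by simpa using hq
        simpa [pow_two] using QuotientGroup.eq.1 this
      obtain ⟨h, hh, hvh⟩ := hcrit v hv2
      exact ⟨v * h, by rw [QuotientGroup.mk_mul]; simp [(QuotientGroup.eq_one_iff h).2 hh], hvh⟩
    choose tf htf1 htf2 using hself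
    set r : G ⧸ H → G := Quotient.out with hr
    have hrmk : ∀ q : G ⧸ H, ((r q : G) : G ⧸ H) = q := fun q => QuotientGroup.out_eq' q
    set f : G ⧸ H → G := fun q =>
      if hq : q⁻¹ = q then tf q hq else if q < q⁻¹ then r q else (r q⁻¹)⁻¹
      with hf
    have feq1 : ∀ (q : G ⧸ H) (h : q⁻¹ = q), f q = tf q h := by
      intro q h; simp only [hf]; rw [dif_pos h]
    have feq2 : ∀ (q : G ⧸ H), q⁻¹ ≠ q → q < q⁻¹ → f q = r q := by
      intro q h h'; simp only [hf]; rw [dif_neg h, if_pos h']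
    have feq3 : ∀ (q : G ⧸ H), q⁻¹ ≠ q → ¬ q < q⁻¹ → f q = (r q⁻¹)⁻¹ := by
      intro q h h'; simp only [hf]; rw [dif_neg h, if_neg h']
    have fact1 : ∀ q : G ⧸ H, ((f q : G) : G ⧸ H) = q := by
      intro q
      by_cases h1 : q⁻¹ = q
      · rw [feq1 q h1]; exact htf1 q h1
      · by_cases h2 : q < q⁻¹
        · rw [feq2 q h1 h2]; exact hrmk q
        · rw [feq3 q h1 h2, QuotientGroup.mk_inv, hrmk q⁻¹, inv_inv]
    have fact2 : ∀ q : G ⧸ H, f q⁻¹ = (f q)⁻¹ := by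
      intro q
      by_cases h1 : q⁻¹ = q
      · rw [h1]
        have h2 : (f q) ^ 2 = 1 := by rw [feq1 q h1]; exact htf2 q h1
        rw [eq_comm, inv_eq_iff_mul_eq_one, ← pow_two]; exact h2
      · have h1' : (q⁻¹)⁻¹ ≠ q⁻¹ := by rw [inv_inv]; exact fun h => h1 h.symm
        by_cases h2 : q < q⁻¹
        · have h3 : ¬ q⁻¹ < (q⁻¹)⁻¹ := by rw [inv_inv]; exact lt_asymm h2
          rw [feq3 q⁻¹ h1' h3, inv_inv, feq2 q h1 h2]
        · have h2' : q⁻¹ < q := lt_of_le_of_ne (not_lt.1 h2) h1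
          have h3 : q⁻¹ < (q⁻¹)⁻¹ := by rwa [inv_inv]
          rw [feq2 q⁻¹ h1' h3, feq3 q h1 h2, inv_inv]
    set S : Set G := f '' {q | q ≠ 1} with hS
    have hcl : ∀ x ∈ S, x⁻¹ ∈ S := by
      rintro x ⟨q, hq, rfl⟩
      exact ⟨q⁻¹, fun h => hq (by simpa using congrArg (·⁻¹) h), fact2 q⟩
    have hmemS : ∀ x ∈ S, ((x : G) : G ⧸ H) ≠ 1 := by
      rintro x ⟨q, hq, rfl⟩
      rw [fact1]; exact hq
    have huniqS : ∀ x ∈ S, x = f ((x : G) : G ⧸ H) := by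
      rintro x ⟨q, hq, rfl⟩
      rw [fact1]
    refine ⟨S, ?_, ?_, ?_, ?_⟩
    · ext x
      simp only [Set.mem_inv]
      exact ⟨fun h => by simpa using hcl _ h, fun h => hcl x h⟩
    · intro h1
      exact hmemS 1 h1 ((QuotientGroup.eq_one_iff 1).2 H.one_mem)
    · intro u hu v hv hadj
      rw [cayley, SimpleGraph.fromRel_adj] at hadj
      rcases hadj.2 with h | h
      · exact hmemS _ h ((QuotientGroup.eq_one_iff _).2 (H.mul_mem hv (H.inv_mem hu)))
      · exact hmemS _ h ((QuotientGroup.eq_one_iff _).2 (H.mul_mem hu (H.inv_mem hv)))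
    · intro v hv
      set q : G ⧸ H := (v : G ⧸ H) with hqd
      have hq1 : q ≠ 1 := fun h => hv ((QuotientGroup.eq_one_iff v).1 h)
      have hfqS : f q ∈ S := ⟨q, hq1, rfl⟩
      have humem : (((f q)⁻¹ * v : G) : G ⧸ H) = 1 := by
        rw [QuotientGroup.mk_mul, QuotientGroup.mk_inv, fact1, ← hqd, inv_mul_cancel]
      refine ⟨(f q)⁻¹ * v, ⟨(QuotientGroup.eq_one_iff _).1 humem, ?_⟩, ?_⟩
      · rw [cayley, SimpleGraph.fromRel_adj]
        constructor
        · intro h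
          exact hv (h ▸ (QuotientGroup.eq_one_iff _).1 humem)
        · right
          have : v * ((f q)⁻¹ * v)⁻¹ = f q := by group
          rw [this]; exact hfqS
      · rintro u' ⟨hu'H, hadj⟩
        rw [cayley, SimpleGraph.fromRel_adj] at hadj
        have hs' : v * u'⁻¹ ∈ S := by
          rcases hadj.2 with h | h
          · simpa [mul_inv_rev] using hcl _ h
          · exact h
        have hmk : ((v * u'⁻¹ : G) : G ⧸ H) = q := by
          rw [QuotientGroup.mk_mul, QuotientGroup.mk_inv,
            (QuotientGroup.eq_one_iff u').2 hu'H, ← hqd]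
          simp
        have h4 := huniqS _ hs'
        rw [hmk] at h4
        rw [← h4]
        group

lemma mem_sylowTwo {G : Type*} [CommGroup G] {x : G} :
    x ∈ sylowTwo G ↔ ∃ n : ℕ, orderOf x = 2 ^ n := by
  show (∃ k : ℕ, x ^ 2 ^ k = 1) ↔ _
  constructor
  · rintro ⟨k, hk⟩
    obtain ⟨m, _, hm⟩ := (Nat.dvd_prime_pow Nat.prime_two).1 (orderOf_dvd_of_pow_eq_one hk)
    exact ⟨m, hm⟩
  · rintro ⟨n, hn⟩
    exact ⟨n, by rw [← hn, pow_orderOf_eq_one]⟩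

theorem crit_transfer (G : Type*) [CommGroup G] [Fintype G] (H : Subgroup G) :
    (∀ g : G, g ^ 2 ∈ H → ∃ h ∈ H, (g * h) ^ 2 = 1) ↔
    (∀ x : sylowTwo G, x ^ 2 ∈ H.subgroupOf (sylowTwo G) →
      ∃ h ∈ H.subgroupOf (sylowTwo G), (x * h) ^ 2 = 1) := by
  constructor
  · intro hc x hx2
    have hx2' : ((x : G)) ^ 2 ∈ H := by
      have := Subgroup.mem_subgroupOf.1 hx2
      push_cast at this
      exact this
    obtain ⟨h, hh, hxh⟩ := hc (x : G) hx2'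
    have hxhm : ((x : G) * h) ∈ sylowTwo G := by
      rw [mem_sylowTwo]
      have hd : orderOf ((x : G) * h) ∣ 2 := orderOf_dvd_of_pow_eq_one hxh
      rcases (Nat.dvd_prime Nat.prime_two).1 hd with h1 | h1
      · exact ⟨0, by simpa using h1⟩
      · exact ⟨1, by simpa using h1⟩
    have hhm : h ∈ sylowTwo G := by
      have := (sylowTwo G).mul_mem ((sylowTwo G).inv_mem x.2) hxhm
      simpa [inv_mul_cancel_left] using this
    refine ⟨⟨h, hhm⟩, Subgroup.mem_subgroupOf.2 hh, ?_⟩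
    apply Subtype.ext
    push_cast
    exact hxh
  · intro hc g hg2
    set n := orderOf g with hn
    have hn0 : n ≠ 0 := (orderOf_pos g).ne'
    set a := n.factorization 2 with ha
    set b := n / 2 ^ a with hb
    have hnab : 2 ^ a * b = n := Nat.ordProj_mul_ordCompl_eq_self n 2
    have hbodd : ¬ 2 ∣ b := Nat.not_dvd_ordCompl Nat.prime_two hn0
    have hcop : (2 ^ a).Coprime b := (Nat.coprime_ordCompl Nat.prime_two hn0).pow_left a
    obtain ⟨c, hc1, hc0⟩ := Nat.chineseRemainder hcop 1 0
    have hbc : b ∣ c := Nat.modEq_zero_iff_dvd.1 hc0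
    have hdvd1 : ((2 : ℤ) ^ a) ∣ (1 - (c : ℤ)) := by
      have := hc1.dvd
      push_cast at this
      exact this
    set g₂ : G := g ^ c with hg2d
    have hg2mem : g₂ ∈ sylowTwo G := by
      rw [mem_sylowTwo]
      have hpow : g₂ ^ (2 ^ a) = 1 := by
        rw [hg2d, ← pow_mul]
        apply orderOf_dvd_iff_pow_eq_one.1
        rw [← hn, ← hnab, mul_comm c (2 ^ a)]
        exact mul_dvd_mul_left _ hbc
      have hd : orderOf g₂ ∣ 2 ^ a := orderOf_dvd_of_pow_eq_one hpow
      obtain ⟨m, _, hm⟩ := (Nat.dvd_prime_pow Nat.prime_two).1 hd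
      exact ⟨m, hm⟩
    set godd : G := g * g₂⁻¹ with hgodd
    have hgoddz : godd = g ^ ((1 : ℤ) - (c : ℤ)) := by
      rw [hgodd, hg2d, zpow_sub, zpow_one, zpow_natCast]
    have hgoddb : godd ^ b = 1 := by
      rw [hgoddz, ← zpow_natCast, ← zpow_mul]
      apply orderOf_dvd_iff_zpow_eq_one.1
      rw [← hn, ← hnab]
      push_cast
      exact mul_dvd_mul_right hdvd1 _
    have hgsplit : g₂ * godd = g := by rw [hgodd, mul_comm g g₂⁻¹, mul_inv_cancel_left]
    have hg22 : g₂ ^ 2 = (g ^ 2) ^ c := by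
      rw [hg2d, ← pow_mul, ← pow_mul, mul_comm]
    have hg22H : g₂ ^ 2 ∈ H := hg22 ▸ H.pow_mem hg2 c
    have hgodd2H : godd ^ 2 ∈ H := by
      have : godd ^ 2 = g ^ 2 * (g₂ ^ 2)⁻¹ := by
        rw [hgodd, mul_pow, inv_pow]
      rw [this]
      exact H.mul_mem hg2 (H.inv_mem hg22H)
    have hgoddH : godd ∈ H := by
      have hmdvd : orderOf godd ∣ b := orderOf_dvd_of_pow_eq_one hgoddb
      have hmodd : ¬ 2 ∣ orderOf godd := fun h => hbodd (h.trans hmdvd)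
      have heven : Even (orderOf godd + 1) := (Nat.odd_iff.2 (Nat.not_even_iff.1
        (fun h => hmodd h.two_dvd))).add_one
      obtain ⟨k, hk⟩ := heven
      have h1 : godd = godd ^ (orderOf godd + 1) := by
        rw [pow_succ, pow_orderOf_eq_one, one_mul]
      have h2 : godd = (godd ^ 2) ^ k := by
        rw [← pow_mul, two_mul, ← hk, ← h1]
      rw [h2]
      exact H.pow_mem hgodd2H k
    have hx2 : (⟨g₂, hg2mem⟩ : sylowTwo G) ^ 2 ∈ H.subgroupOf (sylowTwo G) := by
      rw [Subgroup.mem_subgroupOf]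
      push_cast
      exact hg22H
    obtain ⟨h, hh, hxh⟩ := hc ⟨g₂, hg2mem⟩ hx2
    have hhH : (h : G) ∈ H := Subgroup.mem_subgroupOf.1 hh
    have hxh' : (g₂ * (h : G)) ^ 2 = 1 := by
      have := congrArg (Subtype.val) hxh
      push_cast at this
      exact this
    refine ⟨(h : G) * godd⁻¹, H.mul_mem hhH (H.inv_mem hgoddH), ?_⟩
    have hre : g * ((h : G) * godd⁻¹) = g₂ * (h : G) := by
      rw [← hgsplit]
      simp [mul_comm, mul_left_comm, mul_assoc]
    rw [hre, hxh']

/-- For a proper subgroup `H` of a finite abelian group `G`, `H` is a perfect code of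
`G` iff the Sylow `2`-subgroup `H₂` of `H` is a perfect code of `G₂`. -/
theorem perfect_code_iff_sylow_two_perfect_code (G : Type*) [CommGroup G] [Fintype G]
    (H : Subgroup G) (hH : H ≠ ⊤) :
    IsPerfectCodeOfGroup G (H : Set G) ↔
      IsPerfectCodeOfGroup (sylowTwo G) ((H.subgroupOf (sylowTwo G) : Subgroup (sylowTwo G)) : Set (sylowTwo G)) := by
  rw [code_iff_crit H, code_iff_crit (H.subgroupOf (sylowTwo G))]
  exact crit_transfer G H
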